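/- Let C₁, …, C_m ⊆ ℝⁿ be nonempty convex sets and C₀ := conv(C₁ ∪ ⋯ ∪ C_m). Then ri(C₀) = ⋃ { λ₁·ri(C₁) + ⋯ + λ_m·ri(C_m) : λᵢ > 0 for all i, Σλᵢ = 1 }, where ri denotes relative interior and the sum is a Minkowski sum of scaled sets. -/

import Mathlib

variable {E : Type*} [NormedAddCommGroup E] [NormedSpace ℝ E]

theorem mem_ri_iff {s : Set E} {x : E} :
    x ∈ intrinsicInterior ℝ s ↔ x ∈ affineSpan ℝ s ∧
      ∃ ε > 0, ∀ y ∈ affineSpan ℝ s, dist y x < ε → y ∈ s := by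
  constructor
  · rintro ⟨⟨x, hx⟩, hx', rfl⟩
    rw [mem_interior_iff_mem_nhds.trans Metric.mem_nhds_iff] at hx'
    obtain ⟨ε, hε, hball⟩ := hx'
    refine ⟨hx, ε, hε, fun y hy hdist => ?_⟩
    exact hball (show (⟨y, hy⟩ : affineSpan ℝ s) ∈ Metric.ball _ _ by
      simpa [Metric.mem_ball, Subtype.dist_eq] using hdist)
  · rintro ⟨hx, ε, hε, h⟩
    exact ⟨⟨x, hx⟩, (mem_interior_iff_mem_nhds.trans Metric.mem_nhds_iff).2 ⟨ε, hε, fun y hy =>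
      h y y.2 (by simpa [Metric.mem_ball, Subtype.dist_eq] using hy)⟩, rfl⟩

theorem combo_mem_ri {s : Set E} (hs : Convex ℝ s) {a b : E}
    (ha : a ∈ intrinsicInterior ℝ s) (hb : b ∈ s) {t : ℝ} (ht : 0 < t) (ht1 : t ≤ 1) :
    t • a + (1 - t) • b ∈ intrinsicInterior ℝ s := by
  rw [mem_ri_iff] at ha ⊢
  obtain ⟨haspan, ε, hε, hball⟩ := ha
  have hbspan : b ∈ affineSpan ℝ s := subset_affineSpan ℝ s hb
  have hzspan : t • a + (1 - t) • b ∈ affineSpan ℝ s := by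
    have h1 := AffineSubspace.smul_vsub_vadd_mem (affineSpan ℝ s) t haspan hbspan hbspan
    have heq : t • a + (1 - t) • b = t • (a -ᵥ b) +ᵥ b := by
      simp only [vsub_eq_sub, vadd_eq_add]; module
    rw [heq]; exact h1
  refine ⟨hzspan, t * ε, by positivity, fun y hy hdist => ?_⟩
  set z := t • a + (1 - t) • b with hz
  have ha' : a + t⁻¹ • (y - z) ∈ affineSpan ℝ s := by
    have h1 := AffineSubspace.smul_vsub_vadd_mem (affineSpan ℝ s) t⁻¹ hy hzspan haspan
    have heq : a + t⁻¹ • (y - z) = t⁻¹ • (y -ᵥ z) +ᵥ a := by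
      simp only [vsub_eq_sub, vadd_eq_add]; module
    rw [heq]; exact h1
  have hdista : dist (a + t⁻¹ • (y - z)) a < ε := by
    rw [dist_eq_norm] at hdist ⊢
    have : a + t⁻¹ • (y - z) - a = t⁻¹ • (y - z) := by module
    rw [this, norm_smul, Real.norm_eq_abs, abs_inv, abs_of_pos ht]
    rw [inv_mul_lt_iff₀ ht]
    simpa [mul_comm] using hdist
  have hmem : a + t⁻¹ • (y - z) ∈ s := hball _ ha' hdista
  have hy' : y = t • (a + t⁻¹ • (y - z)) + (1 - t) • b := by
    rw [smul_add, smul_smul, mul_inv_cancel₀ ht.ne', one_smul]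
    rw [hz]; module
  rw [hy']
  exact hs hmem hb ht.le (by linarith) (by ring)

theorem ri_extend {s : Set E} {x z : E} (hx : x ∈ intrinsicInterior ℝ s)
    (hz : z ∈ affineSpan ℝ s) : ∃ μ : ℝ, 1 < μ ∧ z + μ • (x - z) ∈ s := by
  rw [mem_ri_iff] at hx
  obtain ⟨hxspan, ε, hε, hball⟩ := hx
  set d := dist x z with hd
  have hd0 : 0 ≤ d := dist_nonneg
  refine ⟨1 + ε / (2 * (d + 1)), by linarith [(by positivity : (0:ℝ) < ε / (2 * (d + 1)))], ?_⟩
  have hspan : z + (1 + ε / (2 * (d + 1))) • (x - z) ∈ affineSpan ℝ s := by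
    have h1 := AffineSubspace.smul_vsub_vadd_mem (affineSpan ℝ s)
      (1 + ε / (2 * (d + 1))) hxspan hz hz
    have heq : z + (1 + ε / (2 * (d + 1))) • (x - z) = (1 + ε / (2 * (d + 1))) • (x -ᵥ z) +ᵥ z := by
      simp only [vsub_eq_sub, vadd_eq_add]; module
    rw [heq]; exact h1
  refine hball _ hspan ?_
  rw [dist_eq_norm]
  have : z + (1 + ε / (2 * (d + 1))) • (x - z) - x = (ε / (2 * (d + 1))) • (x - z) := by
    module
  rw [this, norm_smul, Real.norm_eq_abs, abs_of_pos (show (0:ℝ) < ε / (2 * (d + 1)) by positivity)]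
  have hnorm : ‖x - z‖ = d := by rw [hd, dist_eq_norm]
  rw [hnorm]
  calc ε / (2 * (d + 1)) * d ≤ ε / (2 * (d + 1)) * (d + 1) := by
        apply mul_le_mul_of_nonneg_left (by linarith) (by positivity)
    _ = ε / 2 := by field_simp
    _ < ε := by linarith

theorem mem_ri_of_forall {s : Set E} [FiniteDimensional ℝ E] (hs : Convex ℝ s) {x : E}
    (hx : x ∈ s) (h : ∀ z ∈ s, ∃ μ : ℝ, 1 < μ ∧ z + μ • (x - z) ∈ s) :
    x ∈ intrinsicInterior ℝ s := by
  obtain ⟨a, ha⟩ := Set.Nonempty.intrinsicInterior hs ⟨x, hx⟩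
  obtain ⟨μ, hμ, hp⟩ := h a (intrinsicInterior_subset ha)
  have hμ0 : (0:ℝ) < μ := by linarith
  have hx' : x = (1 - 1/μ) • a + (1 - (1 - 1/μ)) • (a + μ • (x - a)) := by
    field_simp
    match_scalars <;> field_simp <;> ring
  rw [hx']
  exact combo_mem_ri hs ha hp (by
    have : 1/μ < 1 := by rw [div_lt_one hμ0]; exact hμ
    linarith) (by
    have : 0 < 1/μ := by positivity
    linarith)

theorem hull_union_rep {n m : ℕ} (C : Fin m → Set (Fin n → ℝ))
    (hne : ∀ i, (C i).Nonempty) (hconv : ∀ i, Convex ℝ (C i)) {x : Fin n → ℝ} :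
    x ∈ convexHull ℝ (⋃ i, C i) ↔ ∃ ν : Fin m → ℝ, (∀ i, 0 ≤ ν i) ∧ ∑ i, ν i = 1 ∧
      ∃ z : Fin m → (Fin n → ℝ), (∀ i, z i ∈ C i) ∧ x = ∑ i, ν i • z i := by
  constructor
  · set T : Set (Fin n → ℝ) := {x | ∃ ν : Fin m → ℝ, (∀ i, 0 ≤ ν i) ∧ ∑ i, ν i = 1 ∧
      ∃ z : Fin m → (Fin n → ℝ), (∀ i, z i ∈ C i) ∧ x = ∑ i, ν i • z i} with hT
    have hsub : (⋃ i, C i) ⊆ T := by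
      rintro a ha
      obtain ⟨j, hj⟩ := Set.mem_iUnion.1 ha
      refine ⟨fun i => if i = j then 1 else 0, fun i => by positivity, by simp, 
        fun i => if i = j then a else (hne i).some, fun i => ?_, ?_⟩
      · by_cases h : i = j
        · subst h; simp [hj]
        · simp [h, (hne i).some_mem]
      · have : ∀ i, (if i = j then (1:ℝ) else 0) • (if i = j then a else (hne i).some)
            = if i = j then a else 0 := by
          intro i; by_cases h : i = j <;> simp [h]
        simp [this]
    have hTconv : Convex ℝ T := by
      rintro x ⟨ν, hν, hνs, z, hz, rfl⟩ x' ⟨ν', hν', hνs', z', hz', rfl⟩ θ θ' hθ hθ' hθθ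
      set νc : Fin m → ℝ := fun i => θ * ν i + θ' * ν' i with hνc
      have hνc0 : ∀ i, 0 ≤ νc i := fun i => by
        have := hν i; have := hν' i; positivity
      set zc : Fin m → (Fin n → ℝ) := fun i => if h : νc i = 0 then (hne i).some
        else (νc i)⁻¹ • ((θ * ν i) • z i + (θ' * ν' i) • z' i) with hzc
      have hterm : ∀ i, νc i • zc i = (θ * ν i) • z i + (θ' * ν' i) • z' i := by
        intro i
        by_cases h : νc i = 0
        · have hsum0 : θ * ν i + θ' * ν' i = 0 := h
          have ha0 : 0 ≤ θ * ν i := mul_nonneg hθ (hν i)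
          have hb0 : 0 ≤ θ' * ν' i := mul_nonneg hθ' (hν' i)
          have h1 : θ * ν i = 0 := by linarith
          have h2 : θ' * ν' i = 0 := by linarith
          simp [hzc, h, h1, h2]
        · simp only [hzc, dif_neg h, smul_smul, mul_inv_cancel₀ h, one_smul]
      refine ⟨νc, hνc0, ?_, zc, fun i => ?_, ?_⟩
      · simp only [hνc, Finset.sum_add_distrib, ← Finset.mul_sum, hνs, hνs']
        linarith
      · by_cases h : νc i = 0
        · simp [hzc, h, (hne i).some_mem]
        · have hmem := hconv i (hz i) (hz' i)
            (div_nonneg (mul_nonneg hθ (hν i)) (hνc0 i))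
            (div_nonneg (mul_nonneg hθ' (hν' i)) (hνc0 i))
            (by field_simp; rfl)
          have heq : zc i = (θ * ν i / νc i) • z i + (θ' * ν' i / νc i) • z' i := by
            simp only [hzc]
            rw [dif_neg h, smul_add, smul_smul, smul_smul, div_eq_inv_mul, div_eq_inv_mul]
          rw [heq]; exact hmem
      · rw [Finset.smul_sum, Finset.smul_sum, ← Finset.sum_add_distrib]
        exact (Finset.sum_congr rfl fun i _ => by rw [hterm i, smul_smul, smul_smul]).symm
    exact fun hx => convexHull_min hsub hTconv hx
  · rintro ⟨ν, hν, hνs, z, hz, rfl⟩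
    exact (convex_convexHull ℝ _).sum_mem (fun i _ => hν i) hνs
      (fun i _ => subset_convexHull ℝ _ (Set.mem_iUnion.2 ⟨i, hz i⟩))

theorem stmt_18 (n m : ℕ) (C : Fin m → Set (Fin n → ℝ))
    (hne : ∀ i, (C i).Nonempty) (hconv : ∀ i, Convex ℝ (C i)) :
    intrinsicInterior ℝ (convexHull ℝ (⋃ i, C i)) =
      {x | ∃ lam : Fin m → ℝ, (∀ i, 0 < lam i) ∧ ∑ i, lam i = 1 ∧
        ∃ y : Fin m → (Fin n → ℝ), (∀ i, y i ∈ intrinsicInterior ℝ (C i)) ∧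
          x = ∑ i, lam i • y i} := by
  rcases Nat.eq_zero_or_pos m with hm | hm
  · subst hm
    ext x
    simp only [Set.iUnion_of_empty, convexHull_empty, intrinsicInterior_empty,
      Set.mem_empty_iff_false, Set.mem_setOf_eq, false_iff]
    rintro ⟨lam, _, hsum, _⟩
    simp at hsum
  haveI : Nonempty (Fin m) := ⟨⟨0, hm⟩⟩
  have hmR : (0:ℝ) < m := by exact_mod_cast hm
  set S := convexHull ℝ (⋃ i, C i) with hS
  have hSconv : Convex ℝ S := convex_convexHull ℝ _
  ext x
  simp only [Set.mem_setOf_eq]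
  constructor
  · -- ⊆ : x ∈ ri S → representation
    intro hx
    choose y' hy' using fun i => Set.Nonempty.intrinsicInterior (hconv i) (hne i)
    have hy'C : ∀ i, y' i ∈ C i := fun i => intrinsicInterior_subset (hy' i)
    set e : Fin n → ℝ := ∑ i, ((m:ℝ)⁻¹) • y' i with he
    have heS : e ∈ S := by
      refine hSconv.sum_mem (fun i _ => by positivity) ?_
        (fun i _ => subset_convexHull ℝ _ (Set.mem_iUnion.2 ⟨i, hy'C i⟩))
      simp [Finset.card_univ]
      field_simp
    obtain ⟨μ, hμ, hp⟩ := ri_extend hx (subset_affineSpan ℝ _ heS)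
    have hμ0 : (0:ℝ) < μ := by linarith
    obtain ⟨ν, hν, hνs, z, hz, hpz⟩ := (hull_union_rep C hne hconv).1 hp
    set β : ℝ := (1 - 1/μ) * (m:ℝ)⁻¹ with hβ
    have hβ0 : 0 < β := by
      have h1 : 1/μ < 1 := by rw [div_lt_one hμ0]; exact hμ
      have : 0 < 1 - 1/μ := by linarith
      positivity
    set lam : Fin m → ℝ := fun i => ν i / μ + β with hlam
    have hlam0 : ∀ i, 0 < lam i := fun i => by
      have : 0 ≤ ν i / μ := div_nonneg (hν i) hμ0.le
      simp only [hlam]; linarith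
    set t : Fin m → ℝ := fun i => β / lam i with ht
    set y : Fin m → (Fin n → ℝ) := fun i => t i • y' i + (1 - t i) • z i with hy
    have hymem : ∀ i, y i ∈ intrinsicInterior ℝ (C i) := by
      intro i
      refine combo_mem_ri (hconv i) (hy' i) (hz i) ?_ ?_
      · exact div_pos hβ0 (hlam0 i)
      · rw [div_le_one (hlam0 i)]
        simp only [hlam]
        have : 0 ≤ ν i / μ := div_nonneg (hν i) hμ0.le
        linarith
    refine ⟨lam, hlam0, ?_, y, hymem, ?_⟩
    · simp only [hlam, Finset.sum_add_distrib, ← Finset.sum_div, hνs,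
        Finset.sum_const, Finset.card_univ, Fintype.card_fin, nsmul_eq_mul, hβ]
      field_simp
      ring
    · have key : ∀ i, lam i • y i = (ν i / μ) • z i + β • y' i := by
        intro i
        have hlt : lam i * t i = β := by
          simp only [ht]; field_simp [(hlam0 i).ne']
        have hlb : lam i * (1 - t i) = ν i / μ := by
          rw [mul_sub, mul_one, hlt]
          simp only [hlam]; ring
        have hexp : lam i • y i = (lam i * t i) • y' i + (lam i * (1 - t i)) • z i := by
          simp only [hy, smul_add, smul_smul]
        rw [hexp, hlt, hlb, add_comm]
      have hsum : ∑ i, lam i • y i = (1/μ) • (∑ i, ν i • z i) + (1 - 1/μ) • e := by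
        simp only [he, Finset.smul_sum, ← Finset.sum_add_distrib]
        refine Finset.sum_congr rfl fun i _ => ?_
        rw [key i]
        match_scalars <;> simp only [hβ, one_div] <;> field_simp <;> ring
      rw [hsum, ← hpz]
      match_scalars <;> field_simp <;> ring
  · -- ⊇ : representation → x ∈ ri S
    rintro ⟨lam, hlam, hlamsum, y, hy, rfl⟩
    have hyC : ∀ i, y i ∈ C i := fun i => intrinsicInterior_subset (hy i)
    have hxS : ∑ i, lam i • y i ∈ S :=
      hSconv.sum_mem (fun i _ => (hlam i).le) hlamsum
        (fun i _ => subset_convexHull ℝ _ (Set.mem_iUnion.2 ⟨i, hyC i⟩))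
    have hlam_le_one : ∀ i, lam i ≤ 1 := by
      intro i
      rw [← hlamsum]
      exact Finset.single_le_sum (fun j _ => (hlam j).le) (Finset.mem_univ i)
    refine mem_ri_of_forall hSconv hxS ?_
    intro zz hzz
    obtain ⟨ν, hν, hνs, zv, hzv, rfl⟩ := (hull_union_rep C hne hconv).1 hzz
    have hν1 : ∀ i, ν i ≤ 1 := by
      intro i
      rw [← hνs]
      exact Finset.single_le_sum (fun j _ => hν j) (Finset.mem_univ i)
    have hyspan : ∀ i, y i ∈ affineSpan ℝ (C i) := fun i => (mem_ri_iff.1 (hy i)).1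
    choose ε hε hball using fun i => (mem_ri_iff.1 (hy i)).2
    set d : Fin m → ℝ := fun i => dist (y i) (zv i) with hd
    have hd0 : ∀ i, 0 ≤ d i := fun i => dist_nonneg
    set δ : ℝ := Finset.univ.inf' Finset.univ_nonempty
      (fun i => min (lam i / 2) (lam i * ε i / (2 * (d i + 1)))) with hδ
    have hδ0 : 0 < δ := by
      rw [hδ, Finset.lt_inf'_iff]
      intro i _
      have h1 : 0 < lam i / 2 := by linarith [hlam i]
      have h2 : 0 < lam i * ε i / (2 * (d i + 1)) := by
        have := hlam i; have := hε i; have := hd0 i; positivity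
      exact lt_min h1 h2
    have hδle : ∀ i, δ ≤ lam i / 2 ∧ δ ≤ lam i * ε i / (2 * (d i + 1)) := by
      intro i
      have := Finset.inf'_le (b := i)
        (fun i => min (lam i / 2) (lam i * ε i / (2 * (d i + 1)))) (Finset.mem_univ i)
      exact ⟨le_trans this (min_le_left _ _), le_trans this (min_le_right _ _)⟩
    set c : Fin m → ℝ := fun i => lam i + δ * (lam i - ν i) with hc
    have hc0 : ∀ i, lam i / 2 ≤ c i := by
      intro i
      have h1 := (hδle i).1
      have h2 := hν i
      have h3 := hν1 i
      have h4 := hlam i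
      simp only [hc]
      nlinarith
    have hcpos : ∀ i, 0 < c i := fun i => lt_of_lt_of_le (by linarith [hlam i]) (hc0 i)
    set r : Fin m → ℝ := fun i => δ * ν i / c i with hr
    have hr0 : ∀ i, 0 ≤ r i := fun i =>
      div_nonneg (mul_nonneg hδ0.le (hν i)) (hcpos i).le
    set w : Fin m → (Fin n → ℝ) := fun i => y i + r i • (y i - zv i) with hw
    have hwC : ∀ i, w i ∈ C i := by
      intro i
      refine hball i _ ?_ ?_
      · have h1 := AffineSubspace.smul_vsub_vadd_mem (affineSpan ℝ (C i)) (r i)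
          (hyspan i) (subset_affineSpan ℝ _ (hzv i)) (hyspan i)
        have heq : w i = r i • (y i -ᵥ zv i) +ᵥ y i := by
          simp only [hw, vsub_eq_sub, vadd_eq_add]; module
        rw [heq]; exact h1
      · have heq : w i - y i = r i • (y i - zv i) := by simp only [hw]; module
        rw [dist_eq_norm, heq, norm_smul, Real.norm_eq_abs, abs_of_nonneg (hr0 i)]
        have hnorm : ‖y i - zv i‖ = d i := (dist_eq_norm _ _).symm
        rw [hnorm]
        -- r i * d i < ε i
        have hcr : r i * c i = δ * ν i := div_mul_cancel₀ _ (hcpos i).ne'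
        have h2 := (hδle i).2
        have hδd : δ * (2 * (d i + 1)) ≤ lam i * ε i :=
          (le_div_iff₀ (by positivity : (0:ℝ) < 2 * (d i + 1))).1 h2
        have h5 : r i * (lam i / 2) ≤ δ := by
          calc r i * (lam i / 2) ≤ r i * c i :=
                mul_le_mul_of_nonneg_left (hc0 i) (hr0 i)
            _ = δ * ν i := hcr
            _ ≤ δ * 1 := mul_le_mul_of_nonneg_left (hν1 i) hδ0.le
            _ = δ := mul_one δ
        rcases eq_or_lt_of_le (hr0 i) with hrz | hrz
        · rw [← hrz, zero_mul]; exact hε i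
        · have h7 : r i * lam i * (d i + 1) ≤ 2 * δ * (d i + 1) :=
            mul_le_mul_of_nonneg_right (by linarith) (by linarith [hd0 i])
          have h9 : r i * (d i + 1) * lam i ≤ ε i * lam i := by nlinarith [hδd]
          have h10 : r i * (d i + 1) ≤ ε i := le_of_mul_le_mul_right (by linarith) (hlam i)
          nlinarith [hd0 i]
    have hterm : ∀ i, c i • w i =
        ((1+δ) * lam i) • y i + ((1 - (1+δ)) * ν i) • zv i := by
      intro i
      have hcne := (hcpos i).ne'
      simp only [hw, hr, hc] at hcne ⊢
      match_scalars <;> field_simp <;> ring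
    have hcsum : ∑ i, c i = 1 := by
      simp only [hc, Finset.sum_add_distrib, ← Finset.mul_sum, Finset.sum_sub_distrib,
        hlamsum, hνs]
      ring
    refine ⟨1 + δ, by linarith, ?_⟩
    have hfinal : (∑ i, ν i • zv i) + (1+δ) • ((∑ i, lam i • y i) - ∑ i, ν i • zv i)
        = ∑ i, c i • w i := by
      have : ∑ i, c i • w i = (1+δ) • (∑ i, lam i • y i)
          + (1 - (1+δ)) • (∑ i, ν i • zv i) := by
        rw [Finset.smul_sum, Finset.smul_sum, ← Finset.sum_add_distrib]
        refine Finset.sum_congr rfl fun i _ => ?_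
        rw [hterm i]
        match_scalars <;> ring
      rw [this]
      match_scalars <;> ring
    rw [hfinal]
    exact (hull_union_rep C hne hconv).2
      ⟨c, fun i => (hcpos i).le, hcsum, w, hwC, rfl⟩
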